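/- Let ρ : A → L_B(E) be a nondegenerate u-covariant completely positive map with respect to a C*-dynamical system (G, A, α), with KSGNS triple (Φ_ρ, V_ρ, E_ρ) where V_ρ ξ = lim_λ (e_λ ⊗ ξ + N_ρ) for an approximate unit (e_λ) of A, and let v be the induced unitary representation of G on E_ρ. Then v_g V_ρ = V_ρ u_g for all g ∈ G. -/

import Mathlib

open Matrix Filter

/-- The Hilbert C⋆-module class as it stood in the older Mathlib (right modules, acted on
through `Aᵐᵒᵖ`), under a new name since Mathlib's `CStarModule` now means left modules. -/
class CStarModuleOld (A : outParam <| Type*) (E : Type*) [NonUnitalSemiring A] [StarRing A]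
    [Module ℂ A] [AddCommGroup E] [Module ℂ E] [PartialOrder A] [SMul Aᵐᵒᵖ E] [Norm A] [Norm E]
    extends Inner A E where
  inner_add_right {x} {y} {z} : inner x (y + z) = inner x y + inner x z
  inner_self_nonneg {x} : 0 ≤ inner x x
  inner_self {x} : inner x x = 0 ↔ x = 0
  inner_op_smul_right {a : A} {x y : E} : inner x (MulOpposite.op a • y) = inner x y * a
  inner_smul_right_complex {z : ℂ} {x} {y} : inner x (z • y) = z • inner x y
  star_inner x y : star (inner x y) = inner y x
  norm_eq_sqrt_norm_inner_self x : ‖x‖ = √‖inner x x‖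

/-- For a nondegenerate u-covariant completely positive map ρ, with KSGNS
triple (Φ_ρ, V_ρ, E_ρ) where V_ρ ξ = lim_λ (e_λ ⊗ ξ + N_ρ) for an approximate unit (e_λ)
of A, and v the induced unitary representation of G on E_ρ, one has v_g V_ρ = V_ρ u_g. -/
theorem stmt5
    {A : Type*} [CStarAlgebra A]
    {B : Type*} [NonUnitalCStarAlgebra B] [PartialOrder B] [StarOrderedRing B]
    {E : Type*} [NormedAddCommGroup E] [NormedSpace ℂ E] [SMul Bᵐᵒᵖ E] [CStarModuleOld B E]
    {G : Type*} [Group G]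
    (α : G → A ≃⋆ₐ[ℂ] A)
    (hα : ∀ g h : G, α (g * h) = (α h).trans (α g))
    (u : G → E →L[ℂ] E)
    (hu_one : u 1 = ContinuousLinearMap.id ℂ E)
    (hu_mul : ∀ g h : G, u (g * h) = (u g).comp (u h))
    (hu_inner : ∀ (g : G) (x y : E), inner (𝕜 := B) (u g x) (u g y) = inner (𝕜 := B) x y)
    (hu_surj : ∀ g : G, Function.Surjective (u g))
    (ρ : A →ₗ[ℂ] E →L[ℂ] E)
    (hCP : ∀ (n : ℕ) (x : Matrix (Fin n) (Fin n) A),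
      (∃ y : Matrix (Fin n) (Fin n) A, x = yᴴ * y) →
      ∀ ξ : Fin n → E, 0 ≤ ∑ i, ∑ j, inner (𝕜 := B) (ξ i) (ρ (x i j) (ξ j)))
    (hcov : ∀ (g : G) (a : A), ρ (α g a) = ((u g).comp (ρ a)).comp (u g⁻¹))
    {Eρ : Type*} [NormedAddCommGroup Eρ] [NormedSpace ℂ Eρ] [SMul Bᵐᵒᵖ Eρ]
    [CStarModuleOld B Eρ] [CompleteSpace Eρ]
    (k : A → E → Eρ)
    (hk_inner : ∀ (a b : A) (ξ η : E),
      inner (𝕜 := B) (k a ξ) (k b η) = inner (𝕜 := B) ξ (ρ (star a * b) η))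
    (hk_addl : ∀ (a a' : A) (ξ : E), k (a + a') ξ = k a ξ + k a' ξ)
    (hk_addr : ∀ (a : A) (ξ η : E), k a (ξ + η) = k a ξ + k a η)
    (hk_smull : ∀ (c : ℂ) (a : A) (ξ : E), k (c • a) ξ = c • k a ξ)
    (hk_smulr : ∀ (c : ℂ) (a : A) (ξ : E), k a (c • ξ) = c • k a ξ)
    (hk_opsmul : ∀ (a : A) (ξ : E) (b : B),
      k a (MulOpposite.op b • ξ) = MulOpposite.op b • k a ξ)
    (hk_dense : Dense (↑(Submodule.span ℂ {y : Eρ | ∃ (a : A) (ξ : E), y = k a ξ}) : Set Eρ))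
    -- v : the unitary representation of G on E_ρ induced by u and α
    (v : G → Eρ →L[ℂ] Eρ)
    (hv : ∀ (g : G) (a : A) (ξ : E), v g (k a ξ) = k (α g a) (u g ξ))
    (hv_one : v 1 = ContinuousLinearMap.id ℂ Eρ)
    (hv_mul : ∀ g h : G, v (g * h) = (v g).comp (v h))
    (hv_inner : ∀ (g : G) (x y : Eρ), inner (𝕜 := B) (v g x) (v g y) = inner (𝕜 := B) x y)
    (hv_surj : ∀ g : G, Function.Surjective (v g))
    [PartialOrder A] [StarOrderedRing A]
    -- (e_λ) is an approximate unit of A ...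
    {Λ : Type*} [Nonempty Λ] [SemilatticeSup Λ]
    (e : Λ → A) (he_mono : Monotone e) (he_pos : ∀ l, 0 ≤ e l) (he_norm : ∀ l, ‖e l‖ ≤ 1)
    (he_apprR : ∀ a : A, Tendsto (fun l => a * e l) atTop (nhds a))
    (he_apprL : ∀ a : A, Tendsto (fun l => e l * a) atTop (nhds a))
    -- ... for which ρ is nondegenerate: ρ(e_λ) → 1 strictly
    (hρ_nondeg : ∀ ξ : E, Tendsto (fun l => ρ (e l) ξ) atTop (nhds ξ))
    -- V_ρ ξ = lim_λ (e_λ ⊗ ξ + N_ρ)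
    (Vρ : E →L[ℂ] Eρ)
    (hVρ : ∀ ξ : E, Tendsto (fun l => k (e l) ξ) atTop (nhds (Vρ ξ))) :
    ∀ g : G, (v g).comp Vρ = Vρ.comp (u g) := by

  have hinner_sub : ∀ (x y z : E),
      inner (𝕜 := B) x (y - z) = inner (𝕜 := B) x y - inner (𝕜 := B) x z := by
    intro x y z
    have := CStarModuleOld.inner_add_right (A := B) (x := x) (y := y - z) (z := z)
    rw [sub_add_cancel] at this
    rw [this, add_sub_cancel_right]
  have hnorm_sq : ∀ x : Eρ, ‖x‖ ^ 2 = ‖inner (𝕜 := B) x x‖ := by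
    intro x
    rw [CStarModuleOld.norm_eq_sqrt_norm_inner_self (A := B) x, Real.sq_sqrt (norm_nonneg _)]
  -- Since A is unital, e l → 1 in norm.
  have he_one : Tendsto e atTop (nhds (1 : A)) := by
    simpa using he_apprR 1
  -- positivity of ρ on positive elements (diagonal form)
  have hpos : ∀ (d : A), 0 ≤ d → ∀ ζ : E, 0 ≤ inner (𝕜 := B) ζ (ρ d ζ) := by
    intro d hd ζ
    have hsq1 : star (CFC.sqrt d) * CFC.sqrt d = d := by
      rw [(_root_.IsSelfAdjoint.of_nonneg (CFC.sqrt_nonneg (a := d))).star_eq,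
        CFC.sqrt_mul_sqrt_self d hd]
    have hsq : (Matrix.of fun (_ _ : Fin 1) => d)
        = (Matrix.of fun (_ _ : Fin 1) => CFC.sqrt d)ᴴ * (Matrix.of fun (_ _ : Fin 1) => CFC.sqrt d) := by
      ext i j
      simp [Matrix.mul_apply, Matrix.conjTranspose_apply, hsq1]
    have h1 := hCP 1 (Matrix.of fun _ _ => d) ⟨_, hsq⟩ (fun _ => ζ)
    simpa using h1
  have hmono : ∀ (x y : A), x ≤ y → ∀ ζ : E,
      inner (𝕜 := B) ζ (ρ x ζ) ≤ inner (𝕜 := B) ζ (ρ y ζ) := by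
    intro x y hxy ζ
    have := hpos (y - x) (sub_nonneg.mpr hxy) ζ
    rw [map_sub] at this
    simp only [ContinuousLinearMap.sub_apply, hinner_sub] at this
    exact sub_nonneg.mp this
  -- subtraction rule for k
  have hk_neg : ∀ (a : A) (ξ : E), k (-a) ξ = - k a ξ := by
    intro a ξ
    have := hk_smull (-1) a ξ
    simpa using this
  have hk_sub : ∀ (a a' : A) (ξ : E), k (a - a') ξ = k a ξ - k a' ξ := by
    intro a a' ξ
    rw [sub_eq_add_neg, hk_addl, hk_neg, sub_eq_add_neg]
  -- key: k (e l) ζ → k 1 ζ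
  have key : ∀ ζ : E, Tendsto (fun l => k (e l) ζ) atTop (nhds (k 1 ζ)) := by
    intro ζ
    rw [← tendsto_sub_nhds_zero_iff]
    rw [tendsto_zero_iff_norm_tendsto_zero]
    set M : ℝ := ‖inner (𝕜 := B) ζ ((ρ 1) ζ)‖ with hM
    have hbound : ∀ l, ‖k (e l) ζ - k 1 ζ‖ ^ 2 ≤ ‖(1 - e l) * (1 - e l)‖ * M := by
      intro l
      have h1 : k (e l) ζ - k 1 ζ = - k (1 - e l) ζ := by
        rw [hk_sub]; abel
      rw [h1, norm_neg, hnorm_sq, hk_inner]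
      set c : A := 1 - e l with hc
      have hcsa : star c = c := by
        rw [hc, star_sub, star_one, (IsSelfAdjoint.of_nonneg (he_pos l)).star_eq]
      rw [hcsa]
      set r : ℝ := ‖c * c‖ with hr
      have hle : c * c ≤ algebraMap ℝ A r := by
        have hsa : _root_.IsSelfAdjoint (c * c) := by
          show star (c * c) = c * c
          rw [StarMul.star_mul, hcsa]
        exact hsa.le_algebraMap_norm_self
      have hcc_nonneg : (0 : A) ≤ c * c := by
        have := star_mul_self_nonneg c
        rwa [hcsa] at this
      have h2 : inner (𝕜 := B) ζ ((ρ (c * c)) ζ)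
          ≤ inner (𝕜 := B) ζ ((ρ (algebraMap ℝ A r)) ζ) := hmono _ _ hle ζ
      have h3 : (ρ (algebraMap ℝ A r)) ζ = (r : ℂ) • (ρ 1) ζ := by
        rw [Algebra.algebraMap_eq_smul_one, ← algebraMap_smul ℂ r (1 : A), _root_.map_smul]
        simp [Algebra.algebraMap_eq_smul_one, Complex.coe_algebraMap]
      have h4 : ‖inner (𝕜 := B) ζ ((ρ (c * c)) ζ)‖
          ≤ ‖inner (𝕜 := B) ζ ((ρ (algebraMap ℝ A r)) ζ)‖ :=
        CStarAlgebra.norm_le_norm_of_nonneg_of_le (hpos _ hcc_nonneg ζ) h2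
      calc ‖inner (𝕜 := B) ζ ((ρ (c * c)) ζ)‖
          ≤ ‖inner (𝕜 := B) ζ ((ρ (algebraMap ℝ A r)) ζ)‖ := h4
        _ = r * M := by
            rw [h3]
            have : inner (𝕜 := B) ζ ((r : ℂ) • (ρ 1) ζ) = (r : ℂ) • inner (𝕜 := B) ζ ((ρ 1) ζ) := by
              rw [CStarModuleOld.inner_smul_right_complex]
            rw [this, norm_smul]
            simp [hM, abs_of_nonneg (norm_nonneg (c * c) : (0:ℝ) ≤ r)]
            exact Or.inl (norm_nonneg (c * c))
    have hr0 : Tendsto (fun l => ‖(1 - e l) * (1 - e l)‖ * M) atTop (nhds 0) := by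
      have h1 : Tendsto (fun l => (1 : A) - e l) atTop (nhds 0) := by
        have := (tendsto_const_nhds : Tendsto (fun _ : Λ => (1:A)) atTop (nhds 1)).sub he_one
        simpa using this
      have h2 : Tendsto (fun l => ((1:A) - e l) * ((1:A) - e l)) atTop (nhds 0) := by
        simpa using h1.mul h1
      simpa using (h2.norm.mul_const M)
    have hsq0 : Tendsto (fun l => ‖k (e l) ζ - k 1 ζ‖ ^ 2) atTop (nhds 0) := by
      refine squeeze_zero (fun l => by positivity) hbound hr0
    have := hsq0.sqrt
    simp only [Real.sqrt_zero] at this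
    refine this.congr fun l => ?_
    rw [Real.sqrt_sq (norm_nonneg _)]
  have hV : ∀ ζ : E, Vρ ζ = k 1 ζ := fun ζ =>
    tendsto_nhds_unique (hVρ ζ) (key ζ)
  intro g
  ext ξ
  simp only [ContinuousLinearMap.comp_apply]
  rw [hV ξ, hV (u g ξ), hv g 1 ξ, _root_.map_one (α g)]
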